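/- Let Θ be a d×d integer matrix each of whose columns is a 0-1 vector with exactly one or exactly two entries equal to 1. Then the polynomial q̃_Θ belongs to the ideal I if and only if det Θ is odd. -/
import Mathlib


open MvPolynomial

/-- For a `d×d` integer matrix `Θ` each of whose columns is a 0-1 vector with exactly one
or two entries equal to 1, the modified polynomial `q̃_Θ(z) = ∏_{columns θ} r̃_θ(z)`, where
`r̃_θ(z) = (1+z_k)/2` if `θ = e_k` and `r̃_θ(z) = (z_j+z_k)/2` if `θ = e_j + e_k`, `j ≠ k`.
(For a single one the column sum is 1 and `∑ θ_i z_i = z_k`; for two ones it is `z_j + z_k`.) -/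
noncomputable def qtilde {d : ℕ} (Θ : Matrix (Fin d) (Fin d) ℤ) : MvPolynomial (Fin d) ℝ :=
  ∏ c : Fin d,
    (C (1 / 2 : ℝ) *
      ((if (∑ i, Θ i c) = 1 then 1 else 0) + ∑ i : Fin d, C ((Θ i c : ℝ)) * X i))

lemma eval_qtilde {d : ℕ} (Θ : Matrix (Fin d) (Fin d) ℤ)
    (h12 : ∀ c, (∑ i, Θ i c) = 1 ∨ (∑ i, Θ i c) = 2)
    (y : Fin d → ℤ) (ε : Fin d → ℝ) (hy : ∀ i, ε i = 1 - 2 * (y i : ℝ)) :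
    eval ε (qtilde Θ) = ∏ c, (1 - ((∑ i, Θ i c * y i : ℤ) : ℝ)) := by
  unfold qtilde
  rw [map_prod]
  refine Finset.prod_congr rfl fun c _ => ?_
  have h1 : ∑ i, (Θ i c : ℝ) * ε i
      = (∑ i, (Θ i c : ℝ)) - 2 * ∑ i, (Θ i c : ℝ) * (y i : ℝ) := by
    simp only [hy, mul_sub, mul_one, Finset.sum_sub_distrib, Finset.mul_sum]
    congr 1
    exact Finset.sum_congr rfl fun i _ => by ring
  rcases h12 c with h | h
  · have hA : (∑ i, (Θ i c : ℝ)) = 1 := by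
      have := congrArg (Int.cast : ℤ → ℝ) h; push_cast at this; linarith [this]
    simp only [h, if_pos rfl, map_mul, map_add, map_one (eval ε), eval_C, map_sum, eval_X]
    push_cast
    rw [map_one, h1, hA]
    ring
  · have hA : (∑ i, (Θ i c : ℝ)) = 2 := by
      have := congrArg (Int.cast : ℤ → ℝ) h; push_cast at this; linarith [this]
    rw [if_neg (by omega)]
    simp only [map_mul, map_add, map_zero, eval_C, map_sum, eval_X]
    push_cast
    rw [h1, hA]
    ring

lemma zmod2_cases : ∀ a : ZMod 2, a = 0 ∨ a = 1 := by decide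

/-- If each column of `Θ` is a 0-1 vector with exactly one or two ones, then `q̃_Θ`
vanishes on `Z' = {ε ∈ {−1,1}^d : ε ≠ (1,…,1)}` if and only if `det Θ` is odd. -/
theorem stmt_5 (d : ℕ) (hd : 1 ≤ d) (Θ : Matrix (Fin d) (Fin d) ℤ)
    (h01 : ∀ i c, Θ i c = 0 ∨ Θ i c = 1)
    (h12 : ∀ c, (∑ i, Θ i c) = 1 ∨ (∑ i, Θ i c) = 2) :
    (∀ ε : Fin d → ℝ, (∀ i, ε i = -1 ∨ ε i = 1) → ε ≠ (fun _ => 1) →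
      eval ε (qtilde Θ) = 0) ↔ Odd Θ.det := by
  set M : Matrix (Fin d) (Fin d) (ZMod 2) := Θ.map (Int.castRingHom (ZMod 2)) with hM
  have hmap : ((Θ.det : ℤ) : ZMod 2) = M.det := RingHom.map_det (Int.castRingHom (ZMod 2)) Θ
  have hdet : Odd Θ.det ↔ M.det ≠ 0 := by
    rw [← hmap, Ne, ZMod.intCast_zmod_eq_zero_iff_dvd, Int.odd_iff]
    push_cast
    omega
  -- sum mod 2 lemma
  have hS2 : ∀ (y : Fin d → ℤ) (c : Fin d),
      ((∑ i, Θ i c * y i : ℤ) : ZMod 2) = Matrix.vecMul (fun i => ((y i : ZMod 2))) M c := by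
    intro y c
    simp only [Matrix.vecMul, dotProduct, hM, Matrix.map_apply, Int.coe_castRingHom]
    push_cast
    exact Finset.sum_congr rfl fun i _ => by ring
  have hbound : ∀ (y : Fin d → ℤ), (∀ i, y i = 0 ∨ y i = 1) → ∀ c,
      0 ≤ (∑ i, Θ i c * y i : ℤ) ∧ (∑ i, Θ i c * y i : ℤ) ≤ 2 := by
    intro y hy01 c
    constructor
    · exact Finset.sum_nonneg fun i _ => by
        rcases h01 i c with h | h <;> rcases hy01 i with h' | h' <;> simp [h, h']
    · calc (∑ i, Θ i c * y i : ℤ) ≤ ∑ i, Θ i c := Finset.sum_le_sum fun i _ => by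
            rcases h01 i c with h | h <;> rcases hy01 i with h' | h' <;> simp [h, h']
        _ ≤ 2 := by rcases h12 c with h | h <;> omega
  constructor
  · intro hvan
    rw [hdet]
    intro hdet0
    obtain ⟨x, hx0, hxM⟩ := Matrix.exists_vecMul_eq_zero_iff.mpr hdet0
    set y : Fin d → ℤ := fun i => if x i = 0 then 0 else 1 with hy
    set ε : Fin d → ℝ := fun i => 1 - 2 * (y i : ℝ) with hε
    have hy01 : ∀ i, y i = 0 ∨ y i = 1 := fun i => by
      by_cases h : x i = 0 <;> simp [hy, h]
    have hxy : ∀ i, ((y i : ZMod 2)) = x i := by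
      intro i
      rcases zmod2_cases (x i) with h | h <;> simp [hy, h]
    have hεpm : ∀ i, ε i = -1 ∨ ε i = 1 := fun i => by
      rcases hy01 i with h | h <;> [right; left] <;> simp [hε, h] <;> norm_num
    have hne : ε ≠ fun _ => 1 := by
      obtain ⟨i, hi⟩ := Function.ne_iff.mp hx0
      simp only [Pi.zero_apply] at hi
      intro hcon
      have h1 : ε i = 1 := congrFun hcon i
      have h2 : y i = 1 := by simp [hy, hi]
      rw [hε] at h1
      simp only [h2] at h1
      norm_num at h1
    have hz := hvan ε hεpm hne
    rw [eval_qtilde Θ h12 y ε (fun i => rfl)] at hz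
    obtain ⟨c, -, hc⟩ := Finset.prod_eq_zero_iff.mp hz
    have hSc : (∑ i, Θ i c * y i : ℤ) = 1 := by
      have : ((∑ i, Θ i c * y i : ℤ) : ℝ) = 1 := by linarith [hc]
      exact_mod_cast this
    have hmod : ((∑ i, Θ i c * y i : ℤ) : ZMod 2) = 0 := by
      rw [hS2 y c]
      have : (fun i => ((y i : ZMod 2))) = x := funext hxy
      rw [this, hxM]
      rfl
    rw [hSc] at hmod
    exact one_ne_zero hmod
  · intro hodd ε hεpm hne
    set y : Fin d → ℤ := fun i => if ε i = 1 then 0 else 1 with hy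
    have hy01 : ∀ i, y i = 0 ∨ y i = 1 := fun i => by
      by_cases h : ε i = 1 <;> simp [hy, h]
    have hεy : ∀ i, ε i = 1 - 2 * (y i : ℝ) := by
      intro i
      rcases hεpm i with h | h
      · rw [hy]; simp only [h]; norm_num
      · simp [hy, h]
    rw [eval_qtilde Θ h12 y ε hεy]
    set x : Fin d → ZMod 2 := fun i => ((y i : ZMod 2)) with hx
    have hx0 : x ≠ 0 := by
      obtain ⟨i, hi⟩ := Function.ne_iff.mp hne
      have hεi : ε i = -1 := (hεpm i).resolve_right hi
      intro h
      have h1 : x i = 0 := by simpa using congrFun h i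
      have h2 : y i = 1 := by simp [hy, hi]
      rw [hx] at h1
      simp only [h2] at h1
      exact one_ne_zero h1
    have hxM : Matrix.vecMul x M ≠ 0 := by
      intro h
      exact (hdet.mp hodd) (Matrix.exists_vecMul_eq_zero_iff.mp ⟨x, hx0, h⟩)
    obtain ⟨c, hc⟩ := Function.ne_iff.mp hxM
    refine Finset.prod_eq_zero (Finset.mem_univ c) ?_
    have hnd : ¬ ((2 : ℤ) ∣ (∑ i, Θ i c * y i : ℤ)) := by
      intro hdvd
      apply hc
      have : ((∑ i, Θ i c * y i : ℤ) : ZMod 2) = 0 := by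
        rw [ZMod.intCast_zmod_eq_zero_iff_dvd]
        exact_mod_cast hdvd
      rw [hS2 y c] at this
      exact this
    obtain ⟨hge, hle⟩ := hbound y hy01 c
    have hSc : (∑ i, Θ i c * y i : ℤ) = 1 := by omega
    rw [hSc]
    norm_num
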